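/- Let (Ω, Σ, μ) be a measure space, 0 < ε < 1, f in the closed unit ball of L¹(μ) (complex-valued) and g in the closed unit ball of L∞(μ). If 1 - ε² < Re ∫_Ω f g dμ, then the measurable set C = {t ∈ Ω : Re(f(t)g(t)) > (1-ε)|f(t)|} satisfies Re ∫_C f g dμ > 1 - ε. -/

import Mathlib

open MeasureTheory

theorem stmt1 {Ω : Type*} [MeasurableSpace Ω] (μ : Measure Ω)
    (ε : ℝ) (hε0 : 0 < ε) (hε1 : ε < 1)
    (f g : Ω → ℂ) (hf : Integrable f μ)
    (hf1 : ∫ t, ‖f t‖ ∂μ ≤ 1)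
    (hg : Measurable g) (hg1 : ∀ᵐ t ∂μ, ‖g t‖ ≤ 1)
    (h : 1 - ε ^ 2 < (∫ t, f t * g t ∂μ).re) :
    1 - ε <
      (∫ t in {t | (f t * g t).re > (1 - ε) * ‖f t‖}, f t * g t ∂μ).re := by
  set C := {t | (f t * g t).re > (1 - ε) * ‖f t‖} with hC
  have hfg : Integrable (fun t => f t * g t) μ := by
    have := hf.bdd_mul (c := 1) hg.aestronglyMeasurable
      (by filter_upwards [hg1] with t ht; simpa using ht)
    simpa [mul_comm] using this
  have habs : Integrable (fun t => ‖f t‖) μ := by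
    simpa using hf.norm
  have haux : AEMeasurable (fun t => (f t * g t).re - (1 - ε) * ‖f t‖) μ := by
    have h1 : AEMeasurable (fun t => f t * g t) μ := hfg.aemeasurable
    have h2 : AEMeasurable (fun t => ‖f t‖) μ := habs.aemeasurable
    exact (Complex.measurable_re.comp_aemeasurable h1).sub (h2.const_mul _)
  have hCm : NullMeasurableSet C μ := by
    have : C = (fun t => (f t * g t).re - (1 - ε) * ‖f t‖) ⁻¹' Set.Ioi 0 := by
      ext t; simp [hC, Set.mem_preimage, sub_pos, gt_iff_lt]
    rw [this]
    exact haux.nullMeasurable measurableSet_Ioi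
  have hsplit : (∫ t in C, f t * g t ∂μ) + (∫ t in Cᶜ, f t * g t ∂μ) = ∫ t, f t * g t ∂μ :=
    integral_add_compl₀ hCm hfg
  have hsplit' : (∫ t in C, ‖f t‖ ∂μ) + (∫ t in Cᶜ, ‖f t‖ ∂μ)
      = ∫ t, ‖f t‖ ∂μ := integral_add_compl₀ hCm habs
  set a := ∫ t in C, ‖f t‖ ∂μ
  set b := ∫ t in Cᶜ, ‖f t‖ ∂μ
  have ha0 : 0 ≤ a := integral_nonneg fun t => norm_nonneg _
  have hb0 : 0 ≤ b := integral_nonneg fun t => norm_nonneg _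
  -- R ≤ a
  have hReC : (∫ t in C, f t * g t ∂μ).re = ∫ t in C, (f t * g t).re ∂μ :=
    (integral_re hfg.restrict).symm
  have hReCc : (∫ t in Cᶜ, f t * g t ∂μ).re = ∫ t in Cᶜ, (f t * g t).re ∂μ :=
    (integral_re hfg.restrict).symm
  have hRa : (∫ t in C, f t * g t ∂μ).re ≤ a := by
    rw [hReC]
    refine integral_mono_ae (hfg.restrict.re) (habs.restrict) ?_
    filter_upwards [ae_restrict_of_ae hg1] with t ht
    calc (f t * g t).re ≤ ‖f t * g t‖ := Complex.re_le_norm _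
      _ = ‖f t‖ * ‖g t‖ := norm_mul _ _
      _ ≤ ‖f t‖ * 1 := by
          exact mul_le_mul_of_nonneg_left ht (norm_nonneg _)
      _ = ‖f t‖ := mul_one _
  have hSb : (∫ t in Cᶜ, f t * g t ∂μ).re ≤ (1 - ε) * b := by
    rw [hReCc]
    have : (1 - ε) * b = ∫ t in Cᶜ, (1 - ε) * ‖f t‖ ∂μ := by
      rw [integral_const_mul]
    rw [this]
    refine integral_mono_ae (hfg.restrict.re) (habs.restrict.const_mul _) ?_
    filter_upwards [ae_restrict_mem₀ hCm.compl] with t ht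
    simp only [Set.mem_compl_iff, hC, Set.mem_setOf_eq, not_lt] at ht
    exact ht
  have hab : a + b ≤ 1 := by rw [hsplit']; exact hf1
  have hsum : 1 - ε ^ 2 < (∫ t in C, f t * g t ∂μ).re + (∫ t in Cᶜ, f t * g t ∂μ).re := by
    have := hsplit
    have : ((∫ t in C, f t * g t ∂μ) + (∫ t in Cᶜ, f t * g t ∂μ)).re
        = (∫ t, f t * g t ∂μ).re := by rw [hsplit]
    rw [Complex.add_re] at this
    linarith [h, this.ge, this.le]
  nlinarith [hRa, hSb, hab, hsum, hε0, hε1]
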